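/- Let A be an associative unital algebra over a field K of characteristic 0, f ∈ A invertible with ad f acting locally nilpotently on A, and for x ∈ K let Θ_x(u) := Σ_{i≥0} C(x, i) (ad f)^i(u) f^{−i}. Then Θ_x ∘ Θ_y = Θ_{x+y} for all x, y ∈ K; in particular each Θ_x is bijective with inverse Θ_{−x}. -/

import Mathlib

/-- The generalized (polynomial) binomial coefficient `C(x, i) = x(x-1)⋯(x-i+1)/i!`. -/
noncomputable def genBinom {K : Type*} [Field K] (x : K) (i : ℕ) : K :=
  (∏ j ∈ Finset.range i, (x - j)) / (Nat.factorial i : K)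

lemma descP_smeval {K : Type*} [Field K] (x : K) (n : ℕ) :
    (descPochhammer ℤ n).smeval x = ∏ j ∈ Finset.range n, (x - j) := by
  induction n with
  | zero => simp [descPochhammer_zero]
  | succ n ih =>
      rw [descPochhammer_succ_right, Polynomial.smeval_mul, ih, Finset.prod_range_succ]
      congr 1
      rw [Polynomial.smeval_sub, Polynomial.smeval_X]
      simp [Polynomial.smeval_natCast]

lemma genBinom_eq {K : Type*} [Field K] [CharZero K] (x : K) (n : ℕ) :
    genBinom x n = Ring.choose x n := by
  have h := Ring.descPochhammer_eq_factorial_smul_choose x n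
  rw [descP_smeval] at h
  rw [genBinom, h, nsmul_eq_mul]
  exact mul_div_cancel_left₀ _ (Nat.cast_ne_zero.mpr (Nat.factorial_ne_zero n))

lemma genBinom_vandermonde {K : Type*} [Field K] [CharZero K] (x y : K) (k : ℕ) :
    genBinom (x + y) k = ∑ p ∈ Finset.HasAntidiagonal.antidiagonal k, genBinom x p.1 * genBinom y p.2 := by
  simp only [genBinom_eq]
  exact Ring.add_choose_eq k (Commute.all x y)

lemma box_eq_antidiag {M : Type*} [AddCommMonoid M] (N : ℕ) (F : ℕ → ℕ → M)
    (hF : ∀ a b, N < a + b → F a b = 0) :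
    ∑ j ∈ Finset.range (N+1), ∑ i ∈ Finset.range (N+1), F j i
      = ∑ k ∈ Finset.range (N+1), ∑ p ∈ Finset.HasAntidiagonal.antidiagonal k, F p.1 p.2 := by
  rw [← Finset.sum_product']
  rw [← Finset.sum_biUnion (by
    intro a _ b _ hab
    simp only [Function.onFun]
    rw [Finset.disjoint_left]
    intro p hp hq
    rw [Finset.HasAntidiagonal.mem_antidiagonal] at hp hq
    exact hab (hp ▸ hq ▸ rfl))]
  apply (Finset.sum_subset ?_ ?_).symm
  · intro p hp
    rw [Finset.mem_biUnion] at hp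
    obtain ⟨k, hk, hpk⟩ := hp
    rw [Finset.HasAntidiagonal.mem_antidiagonal] at hpk
    rw [Finset.mem_range] at hk
    simp only [Finset.mem_product, Finset.mem_range]
    omega
  · intro p _ hnp
    apply hF
    by_contra h
    push_neg at h
    exact hnp (Finset.mem_biUnion.mpr ⟨p.1 + p.2, Finset.mem_range.mpr (by omega),
      Finset.HasAntidiagonal.mem_antidiagonal.mpr rfl⟩)

theorem stmt10 {K : Type*} [Field K] [CharZero K]
    {A : Type*} [Ring A] [Algebra K A]
    (f : Aˣ)
    (hnil : ∀ u : A, ∃ N : ℕ, (fun v : A => (f : A) * v - v * (f : A))^[N + 1] u = 0)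
    (Θ : K → A → A)
    (hΘ : ∀ (x : K) (u : A) (N : ℕ),
      (fun v : A => (f : A) * v - v * (f : A))^[N + 1] u = 0 →
      Θ x u = ∑ i ∈ Finset.range (N + 1),
        genBinom x i • ((fun v : A => (f : A) * v - v * (f : A))^[i] u *
          ((f⁻¹ : Aˣ) : A) ^ i)) :
    (∀ (x y : K), Θ x ∘ Θ y = Θ (x + y)) ∧
    (∀ x : K, Function.Bijective (Θ x) ∧
      Function.LeftInverse (Θ (-x)) (Θ x) ∧ Function.RightInverse (Θ (-x)) (Θ x)) := by
  set fi : A := ((f⁻¹ : Aˣ) : A) with hfi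
  let Dl : A →ₗ[K] A :=
    { toFun := fun v => (f : A) * v - v * (f : A)
      map_add' := by intro a b; noncomm_ring
      map_smul' := by
        intro c a
        simp [smul_sub, mul_smul_comm, smul_mul_assoc] }
  have hiter : ∀ (n : ℕ) (v : A),
      (fun v : A => (f : A) * v - v * (f : A))^[n] v = (Dl ^ n) v :=
    fun n v => (Module.End.pow_apply Dl n v).symm
  have hΘ' : ∀ (x : K) (u : A) (N : ℕ), (Dl ^ (N + 1)) u = 0 →
      Θ x u = ∑ i ∈ Finset.range (N + 1), genBinom x i • ((Dl ^ i) u * fi ^ i) := by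
    intro x u N h
    rw [hΘ x u N (by rw [hiter]; exact h)]
    exact Finset.sum_congr rfl fun i _ => by rw [hiter]
  have hcf : ∀ j : ℕ, Commute (f : A) (fi ^ j) :=
    fun j => ((Commute.refl (f : A)).units_inv_right).pow_right j
  have hstep : ∀ (j : ℕ) (v : A), Dl (v * fi ^ j) = Dl v * fi ^ j := by
    intro j v
    show (f : A) * (v * fi ^ j) - (v * fi ^ j) * (f : A)
        = ((f : A) * v - v * (f : A)) * fi ^ j
    rw [sub_mul, mul_assoc v, ← (hcf j).eq, ← mul_assoc, ← mul_assoc, mul_assoc v]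
  have hmul : ∀ (n j : ℕ) (v : A), (Dl ^ n) (v * fi ^ j) = (Dl ^ n) v * fi ^ j := by
    intro n j
    induction n with
    | zero => intro v; simp
    | succ n ih =>
        intro v
        rw [pow_succ, Module.End.mul_apply, hstep, ih, ← Module.End.mul_apply, ← pow_succ]
  have hvanish : ∀ (u : A) (N : ℕ), (Dl ^ (N + 1)) u = 0 →
      ∀ m, N + 1 ≤ m → (Dl ^ m) u = 0 := by
    intro u N h m hm
    obtain ⟨k, rfl⟩ := Nat.exists_eq_add_of_le hm
    rw [show N + 1 + k = k + (N + 1) by ring, pow_add, Module.End.mul_apply, h, map_zero]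
  have hmain : ∀ (x y : K) (u : A), Θ x (Θ y u) = Θ (x + y) u := by
    intro x y u
    obtain ⟨N, hN⟩ := hnil u
    rw [hiter] at hN
    have hv := hvanish u N hN
    have hy := hΘ' y u N hN
    have hnilΘ : (Dl ^ (N + 1)) (Θ y u) = 0 := by
      rw [hy, map_sum]
      refine Finset.sum_eq_zero fun i _ => ?_
      rw [map_smul, hmul (N + 1) i ((Dl ^ i) u), ← Module.End.mul_apply, ← pow_add,
        hv (N + 1 + i) (by omega)]
      simp
    rw [hΘ' x (Θ y u) N hnilΘ, hΘ' (x + y) u N hN]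
    have hterm : ∀ j, (Dl ^ j) (Θ y u) * fi ^ j
        = ∑ i ∈ Finset.range (N + 1), genBinom y i • ((Dl ^ (j + i)) u * fi ^ (j + i)) := by
      intro j
      rw [hy, map_sum, Finset.sum_mul]
      refine Finset.sum_congr rfl fun i _ => ?_
      rw [map_smul, hmul j i ((Dl ^ i) u), smul_mul_assoc, mul_assoc, ← pow_add,
        ← Module.End.mul_apply, ← pow_add, Nat.add_comm i j]
    calc ∑ j ∈ Finset.range (N + 1), genBinom x j • ((Dl ^ j) (Θ y u) * fi ^ j)
        = ∑ j ∈ Finset.range (N + 1), ∑ i ∈ Finset.range (N + 1),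
            (genBinom x j * genBinom y i) • ((Dl ^ (j + i)) u * fi ^ (j + i)) := by
          refine Finset.sum_congr rfl fun j _ => ?_
          rw [hterm j, Finset.smul_sum]
          exact Finset.sum_congr rfl fun i _ => smul_smul _ _ _
      _ = ∑ k ∈ Finset.range (N + 1), ∑ p ∈ Finset.HasAntidiagonal.antidiagonal k,
            (genBinom x p.1 * genBinom y p.2) • ((Dl ^ (p.1 + p.2)) u * fi ^ (p.1 + p.2)) :=
          box_eq_antidiag N
            (fun a b => (genBinom x a * genBinom y b) • ((Dl ^ (a + b)) u * fi ^ (a + b)))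
            (fun a b hab => by simp only [hv (a + b) (by omega), zero_mul, smul_zero])
      _ = ∑ k ∈ Finset.range (N + 1), genBinom (x + y) k • ((Dl ^ k) u * fi ^ k) := by
          refine Finset.sum_congr rfl fun k _ => ?_
          rw [genBinom_vandermonde, Finset.sum_smul]
          refine Finset.sum_congr rfl fun p hp => ?_
          rw [Finset.HasAntidiagonal.mem_antidiagonal] at hp
          rw [hp]
  have hzero : ∀ u : A, Θ (0 : K) u = u := by
    intro u
    obtain ⟨N, hN⟩ := hnil u
    rw [hiter] at hN
    rw [hΘ' 0 u N hN, Finset.sum_eq_single 0]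
    · simp [genBinom]
    · intro i _ hi
      have hg : genBinom (0 : K) i = 0 := by
        rw [genBinom, Finset.prod_eq_zero (Finset.mem_range.mpr (Nat.pos_of_ne_zero hi))
          (by simp), zero_div]
      simp [hg]
    · intro h
      exact absurd (Finset.mem_range.mpr (Nat.succ_pos N)) h
  refine ⟨fun x y => funext fun u => hmain x y u, fun x => ?_⟩
  have hl : Function.LeftInverse (Θ (-x)) (Θ x) := fun u => by
    rw [hmain (-x) x u, neg_add_cancel, hzero]
  have hr : Function.RightInverse (Θ (-x)) (Θ x) := fun u => by
    rw [hmain x (-x) u, add_neg_cancel, hzero]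
  exact ⟨⟨hl.injective, hr.surjective⟩, hl, hr⟩
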